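/- Let (X,d) be a metric space and m : X×X → X a convex midpoint map. Then the m-convex hull operation conv_m is 1-Lipschitz with respect to the Hausdorff metric on nonempty closed bounded subsets: for all nonempty closed bounded subsets B, B' of X, d_H(conv_m(B), conv_m(B')) ≤ d_H(B, B'). -/

import Mathlib

open Metric Set TopologicalSpace

variable {X : Type*}

/-- A geodesic segment from `x` to `y`, parametrized by arclength on `[0, dist x y]`. -/
def IsGeodesicSegment [MetricSpace X] (γ : ℝ → X) (x y : X) : Prop :=
  γ 0 = x ∧ γ (dist x y) = y ∧
    ∀ s ∈ Set.Icc (0 : ℝ) (dist x y), ∀ t ∈ Set.Icc (0 : ℝ) (dist x y),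
      dist (γ s) (γ t) = |s - t|

/-- A metric space is geodesic if any two points are joined by a geodesic segment. -/
def IsGeodesicSpace (X : Type*) [MetricSpace X] : Prop :=
  ∀ x y : X, ∃ γ : ℝ → X, IsGeodesicSegment γ x y

/-- A metric space is uniquely geodesic if any two points are joined by a geodesic
segment, which is moreover unique (as a parametrized segment). -/
def IsUniquelyGeodesic (X : Type*) [MetricSpace X] : Prop :=
  ∀ x y : X, (∃ γ : ℝ → X, IsGeodesicSegment γ x y) ∧
    ∀ γ γ' : ℝ → X, IsGeodesicSegment γ x y → IsGeodesicSegment γ' x y →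
      ∀ t ∈ Set.Icc (0 : ℝ) (dist x y), γ t = γ' t

/-- Geodesic completeness: every geodesic segment extends to a full geodesic line,
i.e. an isometric embedding of `ℝ`. -/
def IsGeodesicallyComplete (X : Type*) [MetricSpace X] : Prop :=
  ∀ (x y : X) (γ : ℝ → X), IsGeodesicSegment γ x y →
    ∃ γ' : ℝ → X, Isometry γ' ∧ γ '' Set.Icc (0 : ℝ) (dist x y) ⊆ Set.range γ'

/-- Geodesics do not split: the image of the bi-infinite geodesic extension of every
nondegenerate geodesic segment is unique. -/
def GeodesicsDoNotSplit (X : Type*) [MetricSpace X] : Prop :=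
  ∀ (x y : X) (γ : ℝ → X), IsGeodesicSegment γ x y → x ≠ y →
    ∀ γ₁ γ₂ : ℝ → X, Isometry γ₁ → Isometry γ₂ →
      γ '' Set.Icc (0 : ℝ) (dist x y) ⊆ Set.range γ₁ →
      γ '' Set.Icc (0 : ℝ) (dist x y) ⊆ Set.range γ₂ →
      Set.range γ₁ = Set.range γ₂

/-- A subset is (geodesically) convex if with any two of its points it contains
the image of every geodesic segment joining them. -/
def IsGeodConvex [MetricSpace X] (C : Set X) : Prop :=
  ∀ a ∈ C, ∀ b ∈ C, ∀ γ : ℝ → X, IsGeodesicSegment γ a b →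
    γ '' Set.Icc (0 : ℝ) (dist a b) ⊆ C

/-- A midpoint map on a metric space: a symmetric map `m` with
`d(m(x,y),x) = d(x,y)/2 = d(m(x,y),y)`. -/
def IsMidpointMap [MetricSpace X] (m : X → X → X) : Prop :=
  (∀ x y, m x y = m y x) ∧
    ∀ x y, dist (m x y) x = dist x y / 2 ∧ dist (m x y) y = dist x y / 2

/-- A convex midpoint map:
`d(m(x₁,y₁), m(x₂,y₂)) ≤ (d(x₁,x₂) + d(y₁,y₂))/2` for all points. -/
def IsConvexMidpointMap [MetricSpace X] (m : X → X → X) : Prop :=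
  IsMidpointMap m ∧
    ∀ x₁ x₂ y₁ y₂ : X, dist (m x₁ y₁) (m x₂ y₂) ≤ (dist x₁ x₂ + dist y₁ y₂) / 2

/-- The space `𝒞(X,d)` of nonempty convex compact subsets of `X`, endowed with the
Hausdorff metric (as a subtype of `NonemptyCompacts X`, whose metric is the
Hausdorff distance). -/
abbrev ConvexCompacts (X : Type*) [MetricSpace X] :=
  {A : NonemptyCompacts X // IsGeodConvex (A : Set X)}

lemma isGeodConvex_singleton [MetricSpace X] (p : X) : IsGeodConvex ({p} : Set X) := by
  rintro a ha b hb γ hγ x ⟨t, ht, rfl⟩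
  rw [Set.mem_singleton_iff] at ha hb
  subst ha; subst hb
  rw [dist_self] at ht
  have : t = 0 := le_antisymm ht.2 ht.1
  subst this
  exact hγ.1

/-- The singleton `{p}` as an element of `𝒞(X,d)`. -/
def singletonCC [MetricSpace X] (p : X) : ConvexCompacts X :=
  ⟨⟨⟨{p}, isCompact_singleton⟩, Set.singleton_nonempty p⟩, isGeodConvex_singleton p⟩

/-- The singleton `{p}` as an element of `𝔉(X,d)`, the space of nonempty compact
subsets of `X` with the Hausdorff metric. -/
def singletonNC [MetricSpace X] (p : X) : NonemptyCompacts X :=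
  ⟨⟨{p}, isCompact_singleton⟩, Set.singleton_nonempty p⟩

/-- The closed `r`-neighborhood `N_r(A) = {x | ∃ a ∈ A, d(a,x) ≤ r}` of a set. -/
def closedNbhd [MetricSpace X] (r : ℝ) (A : Set X) : Set X :=
  {x : X | ∃ a ∈ A, dist a x ≤ r}

/-- A set is `m`-convex if it contains the `m`-midpoint of each pair of its points. -/
def MConvexSet [MetricSpace X] (m : X → X → X) (A : Set X) : Prop :=
  ∀ a ∈ A, ∀ a' ∈ A, m a a' ∈ A

/-- The `m`-convex hull: the intersection of all closed `m`-convex sets containing `A`. -/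
def mConvexHull [MetricSpace X] (m : X → X → X) (A : Set X) : Set X :=
  ⋂₀ {C : Set X | IsClosed C ∧ MConvexSet m C ∧ A ⊆ C}


lemma mConvexSet_cthickening [MetricSpace X] {m : X → X → X}
    (hconv : IsConvexMidpointMap m) {S : Set X} (hS : MConvexSet m S)
    (hSne : S.Nonempty) {r : ℝ} (hr : 0 ≤ r) :
    MConvexSet m (cthickening r S) := by
  intro x hx y hy
  have hx' : infDist x S ≤ r := by
    rw [mem_cthickening_iff] at hx
    calc infDist x S = (EMetric.infEdist x S).toReal := rfl
      _ ≤ (ENNReal.ofReal r).toReal := ENNReal.toReal_mono ENNReal.ofReal_ne_top hx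
      _ = r := ENNReal.toReal_ofReal hr
  have hy' : infDist y S ≤ r := by
    rw [mem_cthickening_iff] at hy
    calc infDist y S = (EMetric.infEdist y S).toReal := rfl
      _ ≤ (ENNReal.ofReal r).toReal := ENNReal.toReal_mono ENNReal.ofReal_ne_top hy
      _ = r := ENNReal.toReal_ofReal hr
  have key : infDist (m x y) S ≤ r := by
    refine le_of_forall_pos_le_add fun ε hε => ?_
    have hx2 : infDist x S < r + ε / 2 := by linarith
    have hy2 : infDist y S < r + ε / 2 := by linarith
    obtain ⟨a, haS, ha⟩ := (infDist_lt_iff hSne).mp hx2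
    obtain ⟨a', ha'S, ha'⟩ := (infDist_lt_iff hSne).mp hy2
    have : infDist (m x y) S ≤ (dist x a + dist y a') / 2 :=
      le_trans (infDist_le_dist_of_mem (hS a haS a' ha'S)) (hconv.2 x a y a')
    linarith
  rw [mem_cthickening_iff]
  calc EMetric.infEdist (m x y) S = ENNReal.ofReal (infDist (m x y) S) :=
        (ENNReal.ofReal_toReal (infEdist_ne_top hSne)).symm
    _ ≤ ENNReal.ofReal r := ENNReal.ofReal_le_ofReal key

lemma mConvexHull_subset_cthickening [MetricSpace X] {m : X → X → X}
    (hconv : IsConvexMidpointMap m) {B B' : Set X} (hB'ne : B'.Nonempty) {r : ℝ} (hr : 0 ≤ r)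
    (h : ∀ b ∈ B, infDist b B' ≤ r) :
    mConvexHull m B ⊆ cthickening r (mConvexHull m B') := by
  have hsub : B' ⊆ mConvexHull m B' := fun x hx => by
    intro C hC; exact hC.2.2 hx
  have hne : (mConvexHull m B').Nonempty := hB'ne.mono hsub
  have hcl : IsClosed (mConvexHull m B') :=
    isClosed_sInter fun C hC => hC.1
  have hmc : MConvexSet m (mConvexHull m B') := by
    intro a ha a' ha' C hC
    exact hC.2.1 a (ha C hC) a' (ha' C hC)
  intro x hx
  exact hx _ ⟨isClosed_cthickening, mConvexSet_cthickening hconv hmc hne hr,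
    fun b hb => by
      rw [mem_cthickening_iff]
      calc EMetric.infEdist b (mConvexHull m B') ≤ EMetric.infEdist b B' := EMetric.infEdist_anti hsub
        _ = ENNReal.ofReal (infDist b B') := (ENNReal.ofReal_toReal (infEdist_ne_top hB'ne)).symm
        _ ≤ ENNReal.ofReal r := ENNReal.ofReal_le_ofReal (h b hb)⟩

/-- **Lemma 2.8 (first part).** The `m`-convex hull operation is `1`-Lipschitz
with respect to the Hausdorff distance on nonempty closed bounded sets. -/
theorem mConvexHull_lipschitz [MetricSpace X] (m : X → X → X)
    (hconv : IsConvexMidpointMap m) (B B' : Set X)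
    (hBne : B.Nonempty) (hBcl : IsClosed B) (hBbd : Bornology.IsBounded B)
    (hB'ne : B'.Nonempty) (hB'cl : IsClosed B') (hB'bd : Bornology.IsBounded B') :
    hausdorffDist (mConvexHull m B) (mConvexHull m B') ≤ hausdorffDist B B' := by
  set r := hausdorffDist B B' with hrdef
  have hr : 0 ≤ r := hausdorffDist_nonneg
  have hfin : EMetric.hausdorffEdist B B' ≠ ⊤ :=
    hausdorffEdist_ne_top_of_nonempty_of_bounded hBne hB'ne hBbd hB'bd
  have hfin' : EMetric.hausdorffEdist B' B ≠ ⊤ :=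
    hausdorffEdist_ne_top_of_nonempty_of_bounded hB'ne hBne hB'bd hBbd
  have h1 : mConvexHull m B ⊆ cthickening r (mConvexHull m B') :=
    mConvexHull_subset_cthickening hconv hB'ne hr
      (fun b hb => infDist_le_hausdorffDist_of_mem hb hfin)
  have h2 : mConvexHull m B' ⊆ cthickening r (mConvexHull m B) := by
    refine mConvexHull_subset_cthickening hconv hBne hr
      (fun b hb => le_of_le_of_eq (infDist_le_hausdorffDist_of_mem hb hfin')
        (hausdorffDist_comm ..))
  have hne : (mConvexHull m B).Nonempty :=
    hBne.mono (fun x hx C hC => hC.2.2 hx)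
  have hne' : (mConvexHull m B').Nonempty :=
    hB'ne.mono (fun x hx C hC => hC.2.2 hx)
  refine hausdorffDist_le_of_infDist hr (fun x hx => ?_) (fun x hx => ?_)
  · have := h1 hx
    rw [mem_cthickening_iff] at this
    calc infDist x (mConvexHull m B') = (EMetric.infEdist x (mConvexHull m B')).toReal := rfl
      _ ≤ (ENNReal.ofReal r).toReal := ENNReal.toReal_mono ENNReal.ofReal_ne_top this
      _ = r := ENNReal.toReal_ofReal hr
  · have := h2 hx
    rw [mem_cthickening_iff] at this
    calc infDist x (mConvexHull m B) = (EMetric.infEdist x (mConvexHull m B)).toReal := rfl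
      _ ≤ (ENNReal.ofReal r).toReal := ENNReal.toReal_mono ENNReal.ofReal_ne_top this
      _ = r := ENNReal.toReal_ofReal hr
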